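/- Let Q be a finite quiver with a source i, and let Q' be the quiver obtained from Q by reversing all arrows incident to i (so i is a sink of Q'). The BGP reflection functor at i induces an equivalence between the full subcategory of finite-dimensional representations M of Q' with ⊕_{a: j→i} M_j → M_i surjective (equivalently Hom(M, S_i) = 0) and the full subcategory of finite-dimensional representations N of Q with M_i → ⊕_{a: i→j} N_j injective (equivalently Hom(S_i, N) = 0). -/

import Mathlib

open CategoryTheory

/-- A representation of the quiver on vertex set `Q` with arrow sets `E a b` over a
field `k`. -/
structure QvRep (k : Type) [Field k] (Q : Type) (E : Q → Q → Type) where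
  V : Q → Type
  [acg : ∀ q, AddCommGroup (V q)]
  [mod : ∀ q, Module k (V q)]
  map : ∀ {a b : Q}, E a b → (V a →ₗ[k] V b)

attribute [instance] QvRep.acg QvRep.mod

/-- A morphism of representations. -/
structure QvHom {k : Type} [Field k] {Q : Type} {E : Q → Q → Type} (M N : QvRep k Q E) where
  app : ∀ q, M.V q →ₗ[k] N.V q
  comm : ∀ {a b : Q} (f : E a b), (app b).comp (M.map f) = (N.map f).comp (app a)

theorem QvHom.ext' {k : Type} [Field k] {Q : Type} {E : Q → Q → Type} {M N : QvRep k Q E}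
    {φ ψ : QvHom M N} (h : φ.app = ψ.app) : φ = ψ := by
  cases φ; cases ψ; cases h; rfl

/-- The category of representations. -/
instance {k : Type} [Field k] {Q : Type} {E : Q → Q → Type} : Category (QvRep k Q E) where
  Hom := QvHom
  id M := ⟨fun _ => LinearMap.id, fun {a b} f => by
    rw [LinearMap.comp_id, LinearMap.id_comp]⟩
  comp φ ψ := ⟨fun q => (ψ.app q).comp (φ.app q), fun {a b} f => by
    ext x
    have h1 := LinearMap.congr_fun (φ.comm f) x
    have h2 := LinearMap.congr_fun (ψ.comm f) (φ.app a x)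
    simp only [LinearMap.comp_apply] at h1 h2 ⊢
    rw [h1, h2]⟩
  id_comp φ := QvHom.ext' (funext fun q => LinearMap.comp_id _)
  comp_id φ := QvHom.ext' (funext fun q => LinearMap.id_comp _)
  assoc φ ψ χ := QvHom.ext' (funext fun q => (LinearMap.comp_assoc _ _ _).symm)

/-- The quiver obtained by reversing all arrows incident to the vertex `i`. -/
def revE {Q : Type} [DecidableEq Q] (E : Q → Q → Type) (i : Q) : Q → Q → Type :=
  fun a b => if a = i ∨ b = i then E b a else E a b

instance {Q : Type} [DecidableEq Q] (E : Q → Q → Type) [∀ a b, Fintype (E a b)] (i a b : Q) :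
    Fintype (revE E i a b) := by
  unfold revE; split <;> infer_instance

/-- The canonical map `⊕_{a : j → i} M_j → M_i`. -/
noncomputable def canIn {k : Type} [Field k] {Q : Type} [Fintype Q] [DecidableEq Q]
    {E : Q → Q → Type} [∀ a b, Fintype (E a b)] (M : QvRep k Q E) (i : Q) :
    (∀ p : Σ j : Q, E j i, M.V p.1) →ₗ[k] M.V i :=
  ∑ p : Σ j : Q, E j i,
    (M.map p.2).comp (LinearMap.proj (φ := fun p : Σ j : Q, E j i => M.V p.1) p)

/-- The canonical map `N_i → ⊕_{a : i → j} N_j`. -/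
def canOut {k : Type} [Field k] {Q : Type} {E : Q → Q → Type} (N : QvRep k Q E) (i : Q) :
    N.V i →ₗ[k] ∀ p : Σ j : Q, E i j, N.V p.1 :=
  LinearMap.pi fun p => N.map p.2

set_option linter.unusedSectionVars false
set_option maxHeartbeats 1000000

namespace BGP

variable {k : Type} [Field k] {Q : Type} [Fintype Q] [DecidableEq Q]
  {E : Q → Q → Type} {i : Q}

theorem revE_in (j : Q) : revE E i j i = E i j := by
  unfold revE; rw [if_pos (Or.inr rfl)]

theorem revE_out (b : Q) : revE E i i b = E b i := by
  unfold revE; rw [if_pos (Or.inl rfl)]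

theorem revE_non {a b : Q} (ha : a ≠ i) (hb : b ≠ i) : revE E i a b = E a b := by
  unfold revE; rw [if_neg (by tauto)]

def toRev {j : Q} (e : E i j) : revE E i j i := cast (revE_in j).symm e
def ofRev {j : Q} (e : revE E i j i) : E i j := cast (revE_in j) e
def ofRevO {b : Q} (e : revE E i i b) : E b i := cast (revE_out b) e
def ofRevN {a b : Q} (ha : a ≠ i) (hb : b ≠ i) (e : revE E i a b) : E a b :=
  cast (revE_non ha hb) e
def toRevN {a b : Q} (ha : a ≠ i) (hb : b ≠ i) (e : E a b) : revE E i a b :=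
  cast (revE_non ha hb).symm e

@[simp] theorem toRev_ofRev {j : Q} (e : revE E i j i) : toRev (ofRev e) = e := by
  simp [toRev, ofRev]
@[simp] theorem ofRev_toRev {j : Q} (e : E i j) : ofRev (toRev e) = e := by
  simp [toRev, ofRev]
@[simp] theorem ofRevN_toRevN {a b : Q} (ha : a ≠ i) (hb : b ≠ i) (e : E a b) :
    ofRevN ha hb (toRevN ha hb e) = e := by simp [ofRevN, toRevN]
@[simp] theorem toRevN_ofRevN {a b : Q} (ha : a ≠ i) (hb : b ≠ i) (e : revE E i a b) :
    toRevN ha hb (ofRevN ha hb e) = e := by simp [ofRevN, toRevN]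

def sIn (p : Σ j : Q, revE E i j i) : Σ j : Q, E i j := ⟨p.1, ofRev p.2⟩
def sOut (q : Σ j : Q, E i j) : Σ j : Q, revE E i j i := ⟨q.1, toRev q.2⟩

@[simp] theorem sIn_sOut (q : Σ j : Q, E i j) : sIn (sOut q) = q := by
  cases q; simp [sIn, sOut]
@[simp] theorem sOut_sIn (p : Σ j : Q, revE E i j i) : sOut (sIn p) = p := by
  cases p; simp [sIn, sOut]

theorem sIn_ne {p : Σ j : Q, revE E i j i} {q : Σ j : Q, E i j} (h : p ≠ sOut q) :
    sIn p ≠ q := fun hc => h (by rw [← sOut_sIn p, hc])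

theorem canIn_apply {E : Q → Q → Type} [∀ a b, Fintype (E a b)] (M : QvRep k Q E) (i : Q)
    (x : ∀ p : Σ j : Q, E j i, M.V p.1) :
    canIn M i x = ∑ p : Σ j : Q, E j i, M.map p.2 (x p) := by
  unfold canIn
  rw [LinearMap.sum_apply]
  rfl

theorem canIn_single {E : Q → Q → Type} [∀ a b, Fintype (E a b)] (M : QvRep k Q E) (i : Q)
    [DecidableEq (Σ j : Q, E j i)] (p : Σ j : Q, E j i) (v : M.V p.1) :
    canIn M i (Pi.single p v) = M.map p.2 v := by
  rw [canIn_apply]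
  rw [Finset.sum_eq_single p]
  · rw [Pi.single_eq_same]
  · intro q _ hq
    rw [Pi.single_eq_of_ne hq, map_zero]
  · intro h; exact absurd (Finset.mem_univ p) h

/-- Generic submodule of `A × B` used to encode either `B` (when `¬P`) or a
submodule `S` of `A` (when `P`). -/
def condSub {A : Type} [AddCommGroup A] [Module k A] (S : Submodule k A)
    (B : Type) [AddCommGroup B] [Module k B] (P : Prop) : Submodule k (A × B) where
  carrier := {x | x.1 ∈ S ∧ (¬ P → x.1 = 0) ∧ (P → x.2 = 0)}
  add_mem' := by
    rintro x y ⟨h1, h2, h3⟩ ⟨g1, g2, g3⟩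
    exact ⟨S.add_mem h1 g1, fun h => by simp [Prod.fst_add, h2 h, g2 h],
      fun h => by simp [Prod.snd_add, h3 h, g3 h]⟩
  zero_mem' := ⟨S.zero_mem, fun _ => rfl, fun _ => rfl⟩
  smul_mem' := by
    rintro c x ⟨h1, h2, h3⟩
    exact ⟨S.smul_mem c h1, fun h => by simp [Prod.smul_fst, h2 h],
      fun h => by simp [Prod.smul_snd, h3 h]⟩

section condSub

variable {A : Type} [AddCommGroup A] [Module k A] (S : Submodule k A)
  (B : Type) [AddCommGroup B] [Module k B] (P : Prop)

theorem condSub_mem {x : A × B} :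
    x ∈ condSub S B P ↔ x.1 ∈ S ∧ (¬ P → x.1 = 0) ∧ (P → x.2 = 0) := Iff.rfl

noncomputable def cFst : condSub S B P →ₗ[k] A :=
  (LinearMap.fst k A B).comp (condSub S B P).subtype

noncomputable def cSnd : condSub S B P →ₗ[k] B :=
  (LinearMap.snd k A B).comp (condSub S B P).subtype

variable {P}

noncomputable def cInj (hP : ¬ P) : B →ₗ[k] condSub S B P :=
  LinearMap.codRestrict _ (LinearMap.prod 0 LinearMap.id)
    (fun v => ⟨S.zero_mem, fun _ => rfl, fun h => absurd h hP⟩)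

noncomputable def cInj1 (hP : P) : S →ₗ[k] condSub S B P :=
  LinearMap.codRestrict _ ((LinearMap.inl k A B).comp S.subtype)
    (fun v => ⟨v.2, fun h => absurd hP h, fun _ => rfl⟩)

variable {S B}

@[simp] theorem cFst_apply (x : condSub S B P) : cFst S B P x = (x : A × B).1 := rfl
@[simp] theorem cSnd_apply (x : condSub S B P) : cSnd S B P x = (x : A × B).2 := rfl
@[simp] theorem cInj_coe (hP : ¬ P) (v : B) :
    ((cInj S B hP v : condSub S B P) : A × B) = (0, v) := rfl
@[simp] theorem cInj1_coe (hP : P) (v : S) :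
    ((cInj1 S B hP v : condSub S B P) : A × B) = ((v : A), 0) := rfl

theorem condSub_ext {x y : condSub S B P} (h1 : (x : A × B).1 = (y : A × B).1)
    (h2 : (x : A × B).2 = (y : A × B).2) : x = y := Subtype.ext (Prod.ext h1 h2)

theorem mem1 (x : condSub S B P) : (x : A × B).1 ∈ S := x.2.1
theorem mem2 (x : condSub S B P) (h : ¬ P) : (x : A × B).1 = 0 := x.2.2.1 h
theorem mem3 (x : condSub S B P) (h : P) : (x : A × B).2 = 0 := x.2.2.2 h

end condSub

end BGP
namespace BGP

variable {k : Type} [Field k] {Q : Type} [Fintype Q] [DecidableEq Q]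
  {E : Q → Q → Type} [∀ a b, Fintype (E a b)] {i : Q}

section Reflection

variable (hs : ∀ j : Q, IsEmpty (E j i))

/-- The ambient product space for the reflection at `i`. -/
abbrev LL (M : QvRep k Q (revE E i)) : Type := ∀ p : Σ j : Q, revE E i j i, M.V p.1

/-- The space at vertex `j` of the reflected representation. -/
noncomputable def Wsub (M : QvRep k Q (revE E i)) (j : Q) : Submodule k (LL M × M.V j) :=
  condSub (LinearMap.ker (canIn M i)) (M.V j) (j = i)

/-- The maps of the reflected representation. -/
noncomputable def Fmap (M : QvRep k Q (revE E i)) {a b : Q} (e : E a b) :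
    Wsub M a →ₗ[k] Wsub M b :=
  have hb : b ≠ i := fun hb => (hs a).false (hb ▸ e)
  if ha : a = i then
    (cInj _ _ hb).comp
      ((LinearMap.proj (φ := fun p : Σ l : Q, revE E i l i => M.V p.1)
          ⟨b, toRev (ha ▸ e)⟩).comp (cFst _ _ _))
  else
    (cInj _ _ hb).comp ((M.map (toRevN ha hb e)).comp (cSnd _ _ _))

theorem Fmap_src (M : QvRep k Q (revE E i)) {b : Q} (hb : b ≠ i) (e : E i b) :
    Fmap hs M e = (cInj _ _ hb).comp
      ((LinearMap.proj (φ := fun p : Σ l : Q, revE E i l i => M.V p.1)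
          ⟨b, toRev e⟩).comp (cFst _ _ _)) :=
  dif_pos rfl

theorem Fmap_non (M : QvRep k Q (revE E i)) {a b : Q} (ha : a ≠ i) (hb : b ≠ i) (e : E a b) :
    Fmap hs M e = (cInj _ _ hb).comp ((M.map (toRevN ha hb e)).comp (cSnd _ _ _)) :=
  dif_neg ha

/-- The reflection of a representation. -/
noncomputable def Fobj (M : QvRep k Q (revE E i)) : QvRep k Q E where
  V j := Wsub M j
  map e := Fmap hs M e

theorem Fobj_fd (M : QvRep k Q (revE E i)) (hfd : ∀ q, FiniteDimensional k (M.V q)) :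
    ∀ q, FiniteDimensional k ((Fobj hs M).V q) := by
  intro q
  show FiniteDimensional k (Wsub M q)
  haveI : FiniteDimensional k (LL M × M.V q) := by
    haveI : FiniteDimensional k (LL M) := by
      unfold LL; infer_instance
    infer_instance
  infer_instance

theorem Fmap_src_apply (M : QvRep k Q (revE E i)) {b : Q} (hb : b ≠ i) (e : E i b)
    (x : Wsub M i) :
    ((Fmap hs M e x : Wsub M b) : LL M × M.V b).2 = (x : LL M × M.V i).1 ⟨b, toRev e⟩ := by
  rw [Fmap_src hs M hb]; rfl

theorem Fmap_src_apply1 (M : QvRep k Q (revE E i)) {b : Q} (hb : b ≠ i) (e : E i b)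
    (x : Wsub M i) :
    ((Fmap hs M e x : Wsub M b) : LL M × M.V b).1 = 0 := by
  rw [Fmap_src hs M hb]; rfl

theorem Fmap_non_apply (M : QvRep k Q (revE E i)) {a b : Q} (ha : a ≠ i) (hb : b ≠ i)
    (e : E a b) (x : Wsub M a) :
    ((Fmap hs M e x : Wsub M b) : LL M × M.V b).2
      = M.map (toRevN ha hb e) (x : LL M × M.V a).2 := by
  rw [Fmap_non hs M ha hb]; rfl

theorem Fmap_non_apply1 (M : QvRep k Q (revE E i)) {a b : Q} (ha : a ≠ i) (hb : b ≠ i)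
    (e : E a b) (x : Wsub M a) :
    ((Fmap hs M e x : Wsub M b) : LL M × M.V b).1 = 0 := by
  rw [Fmap_non hs M ha hb]; rfl

theorem Fobj_inj (M : QvRep k Q (revE E i)) :
    Function.Injective (canOut (Fobj hs M) i) := by
  show ∀ x y : Wsub M i, canOut (Fobj hs M) i x = canOut (Fobj hs M) i y → x = y
  intro x y h
  have hx2 : ((x : LL M × M.V i)).2 = 0 := mem3 x rfl
  have hy2 : ((y : LL M × M.V i)).2 = 0 := mem3 y rfl
  apply condSub_ext _ (by rw [hx2, hy2])
  funext p
  rcases p with ⟨j, e'⟩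
  by_cases hj : j = i
  · subst hj
    exact ((hs j).false (ofRev e')).elim
  · have hcf : Fmap hs M (ofRev e') x = Fmap hs M (ofRev e') y :=
      congrFun h ⟨j, ofRev e'⟩
    have h2 : (x : LL M × M.V i).1 ⟨j, toRev (ofRev e')⟩
        = (y : LL M × M.V i).1 ⟨j, toRev (ofRev e')⟩ := by
      rw [← Fmap_src_apply hs M hj (ofRev e') x, ← Fmap_src_apply hs M hj (ofRev e') y, hcf]
    have hidx : (⟨j, toRev (ofRev e')⟩ : Σ l : Q, revE E i l i) = ⟨j, e'⟩ := by simp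
    rw [hidx] at h2
    exact h2

end Reflection

end BGP
namespace BGP

variable {k : Type} [Field k] {Q : Type} [Fintype Q] [DecidableEq Q]
  {E : Q → Q → Type} [∀ a b, Fintype (E a b)] {i : Q}

section Funct

variable (hs : ∀ j : Q, IsEmpty (E j i))

/-- The induced map on the ambient products. -/
noncomputable def Lmap {M M' : QvRep k Q (revE E i)} (φ : QvHom M M') : LL M →ₗ[k] LL M' :=
  LinearMap.pi fun p => (φ.app p.1).comp
    (LinearMap.proj (φ := fun p : Σ j : Q, revE E i j i => M.V p.1) p)

@[simp] theorem Lmap_apply {M M' : QvRep k Q (revE E i)} (φ : QvHom M M') (x : LL M)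
    (p : Σ j : Q, revE E i j i) : Lmap φ x p = φ.app p.1 (x p) := rfl

theorem canIn_Lmap {M M' : QvRep k Q (revE E i)} (φ : QvHom M M') (x : LL M) :
    canIn M' i (Lmap φ x) = φ.app i (canIn M i x) := by
  rw [canIn_apply, canIn_apply, map_sum]
  refine Finset.sum_congr rfl fun p _ => ?_
  have := LinearMap.congr_fun (φ.comm p.2) (x p)
  simpa using this.symm

/-- Component of the reflection of a morphism. -/
noncomputable def FhomApp {M M' : QvRep k Q (revE E i)} (φ : QvHom M M') (j : Q) :
    Wsub M j →ₗ[k] Wsub M' j :=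
  LinearMap.codRestrict _ (((Lmap φ).prodMap (φ.app j)).comp (Wsub M j).subtype)
    (by
      rintro ⟨⟨x1, x2⟩, h1, h2, h3⟩
      refine ⟨?_, fun h => ?_, fun h => ?_⟩
      · show canIn M' i (Lmap φ x1) = 0
        rw [canIn_Lmap, show canIn M i x1 = 0 from h1, map_zero]
      · show Lmap φ x1 = 0
        rw [show x1 = 0 from h2 h, map_zero]
      · show φ.app j x2 = 0
        rw [show x2 = 0 from h3 h, map_zero])

@[simp] theorem FhomApp_coe {M M' : QvRep k Q (revE E i)} (φ : QvHom M M') (j : Q)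
    (x : Wsub M j) :
    ((FhomApp φ j x : Wsub M' j) : LL M' × M'.V j)
      = (Lmap φ (x : LL M × M.V j).1, φ.app j (x : LL M × M.V j).2) := rfl

theorem Fhom_comm {M M' : QvRep k Q (revE E i)} (φ : QvHom M M') {a b : Q} (e : E a b) :
    (FhomApp φ b).comp (Fmap hs M e) = (Fmap hs M' e).comp (FhomApp φ a) := by
  have hb : b ≠ i := fun hb => (hs a).false (hb ▸ e)
  apply LinearMap.ext
  intro x
  apply condSub_ext
  · by_cases ha : a = i
    · subst ha
      rw [show ((((FhomApp φ b).comp (Fmap hs M e)) x : Wsub M' b) : LL M' × M'.V b).1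
            = Lmap φ ((Fmap hs M e x : Wsub M b) : LL M × M.V b).1 from rfl]
      rw [Fmap_src_apply1 hs M hb e x, map_zero]
      rw [show (((Fmap hs M' e).comp (FhomApp φ a)) x : LL M' × M'.V b).1
            = ((Fmap hs M' e (FhomApp φ a x) : Wsub M' b) : LL M' × M'.V b).1 from rfl]
      rw [Fmap_src_apply1 hs M' hb e]
    · rw [show ((((FhomApp φ b).comp (Fmap hs M e)) x : Wsub M' b) : LL M' × M'.V b).1
            = Lmap φ ((Fmap hs M e x : Wsub M b) : LL M × M.V b).1 from rfl]
      rw [Fmap_non_apply1 hs M ha hb e x, map_zero]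
      rw [show (((Fmap hs M' e).comp (FhomApp φ a)) x : LL M' × M'.V b).1
            = ((Fmap hs M' e (FhomApp φ a x) : Wsub M' b) : LL M' × M'.V b).1 from rfl]
      rw [Fmap_non_apply1 hs M' ha hb e]
  · by_cases ha : a = i
    · subst ha
      rw [show ((((FhomApp φ b).comp (Fmap hs M e)) x : Wsub M' b) : LL M' × M'.V b).2
            = φ.app b ((Fmap hs M e x : Wsub M b) : LL M × M.V b).2 from rfl]
      rw [Fmap_src_apply hs M hb e x]
      rw [show (((Fmap hs M' e).comp (FhomApp φ a)) x : LL M' × M'.V b).2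
            = ((Fmap hs M' e (FhomApp φ a x) : Wsub M' b) : LL M' × M'.V b).2 from rfl]
      rw [Fmap_src_apply hs M' hb e]
      rfl
    · rw [show ((((FhomApp φ b).comp (Fmap hs M e)) x : Wsub M' b) : LL M' × M'.V b).2
            = φ.app b ((Fmap hs M e x : Wsub M b) : LL M × M.V b).2 from rfl]
      rw [Fmap_non_apply hs M ha hb e x]
      rw [show (((Fmap hs M' e).comp (FhomApp φ a)) x : LL M' × M'.V b).2
            = ((Fmap hs M' e (FhomApp φ a x) : Wsub M' b) : LL M' × M'.V b).2 from rfl]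
      rw [Fmap_non_apply hs M' ha hb e]
      have := LinearMap.congr_fun (φ.comm (toRevN ha hb e)) (x : LL M × M.V a).2
      simpa using this

/-- The reflection functor on the full subcategories. -/
noncomputable def F :
    ObjectProperty.FullSubcategory
        (fun M : QvRep k Q (revE E i) =>
          (∀ q, FiniteDimensional k (M.V q)) ∧ Function.Surjective (canIn M i)) ⥤
      ObjectProperty.FullSubcategory
        (fun N : QvRep k Q E =>
          (∀ q, FiniteDimensional k (N.V q)) ∧ Function.Injective (canOut N i)) where
  obj X := ⟨Fobj hs X.obj, Fobj_fd hs X.obj X.property.1, Fobj_inj hs X.obj⟩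
  map {X Y} φ := ObjectProperty.homMk ⟨fun j => FhomApp φ.hom j, fun {a b} e => Fhom_comm hs φ.hom e⟩
  map_id X := by
    apply ObjectProperty.hom_ext
    apply QvHom.ext'
    funext j
    apply LinearMap.ext
    intro x
    apply condSub_ext <;> rfl
  map_comp {X Y Z} φ ψ := by
    apply ObjectProperty.hom_ext
    apply QvHom.ext'
    funext j
    apply LinearMap.ext
    intro x
    apply condSub_ext <;> rfl

end Funct

end BGP
namespace BGP

variable {k : Type} [Field k] {Q : Type} [Fintype Q] [DecidableEq Q]
  {E : Q → Q → Type} [∀ a b, Fintype (E a b)] {i : Q}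

section FullFaithful

variable (hs : ∀ j : Q, IsEmpty (E j i))

/-- Type-correcting identity. -/
def toW {M : QvRep k Q (revE E i)} {j : Q} (x : (Fobj hs M).V j) : Wsub M j := x

variable {M M' : QvRep k Q (revE E i)}

/-- The components away from `i` of a preimage morphism. -/
noncomputable def phiApp (ψ : QvHom (Fobj hs M) (Fobj hs M')) (j : Q) (hj : j ≠ i) :
    M.V j →ₗ[k] M'.V j :=
  (cSnd _ _ _).comp ((ψ.app j).comp (cInj _ _ hj))

/-- The component family of the induced map on ambient products. -/
noncomputable def gFam (ψ : QvHom (Fobj hs M) (Fobj hs M'))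
    (p : Σ j : Q, revE E i j i) : M.V p.1 →ₗ[k] M'.V p.1 :=
  if hp : p.1 = i then ((hs i).false (cast (congrArg (E i) hp) (ofRev p.2))).elim
  else phiApp hs ψ p.1 hp

/-- The induced map on ambient products of a preimage morphism. -/
noncomputable def gMap (ψ : QvHom (Fobj hs M) (Fobj hs M')) : LL M →ₗ[k] LL M' :=
  LinearMap.pi fun p => (gFam hs ψ p).comp
    (LinearMap.proj (φ := fun p : Σ j : Q, revE E i j i => M.V p.1) p)

theorem gMap_diag (ψ : QvHom (Fobj hs M) (Fobj hs M')) (x : LL M)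
    (p : Σ j : Q, revE E i j i) : gMap hs ψ x p = gFam hs ψ p (x p) := rfl

theorem gFam_ne (ψ : QvHom (Fobj hs M) (Fobj hs M')) {j : Q} (hj : j ≠ i)
    (e : revE E i j i) : gFam hs ψ ⟨j, e⟩ = phiApp hs ψ j hj := dif_neg hj

theorem gMap_apply (ψ : QvHom (Fobj hs M) (Fobj hs M')) (x : LL M) {j : Q} (hj : j ≠ i)
    (e : revE E i j i) : gMap hs ψ x ⟨j, e⟩ = phiApp hs ψ j hj (x ⟨j, e⟩) := by
  rw [gMap_diag, gFam_ne hs ψ hj]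

theorem gMap_single [DecidableEq (Σ l : Q, revE E i l i)]
    (ψ : QvHom (Fobj hs M) (Fobj hs M')) {a : Q} (ha : a ≠ i) (e' : revE E i a i)
    (v : M.V a) :
    gMap hs ψ (Pi.single ⟨a, e'⟩ v)
      = Pi.single (⟨a, e'⟩ : Σ l : Q, revE E i l i) (phiApp hs ψ a ha v) := by
  funext p
  rw [gMap_diag]
  rw [show phiApp hs ψ a ha v = gFam hs ψ ⟨a, e'⟩ v from by rw [gFam_ne hs ψ ha]]
  exact Pi.apply_single (fun p => gFam hs ψ p) (fun p => map_zero _) ⟨a, e'⟩ v p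

theorem psi_snd (ψ : QvHom (Fobj hs M) (Fobj hs M')) (w : Wsub M i) :
    ((toW hs (ψ.app i w)) : LL M' × M'.V i).2 = 0 :=
  mem3 (toW hs (ψ.app i w)) rfl

theorem psi_fst (ψ : QvHom (Fobj hs M) (Fobj hs M')) (w : Wsub M i) :
    ((toW hs (ψ.app i w)) : LL M' × M'.V i).1 = gMap hs ψ (w : LL M × M.V i).1 := by
  funext p
  rcases p with ⟨j, e⟩
  by_cases hj : j = i
  · subst hj
    exact ((hs j).false (ofRev e)).elim
  · have hcomm : ψ.app j (Fmap hs M (ofRev e) w) = Fmap hs M' (ofRev e) (ψ.app i w) :=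
      LinearMap.congr_fun (ψ.comm (ofRev e)) w
    have hL : Fmap hs M (ofRev e) w
        = cInj _ _ hj ((w : LL M × M.V i).1 ⟨j, toRev (ofRev e)⟩) := by
      rw [Fmap_src hs M hj]; rfl
    have h2 := congrArg (fun z : Wsub M' j => (z : LL M' × M'.V j).2) hcomm
    simp only [hL] at h2
    have h3 : phiApp hs ψ j hj ((w : LL M × M.V i).1 ⟨j, toRev (ofRev e)⟩)
        = ((Fmap hs M' (ofRev e) (ψ.app i w) : Wsub M' j) : LL M' × M'.V j).2 := h2
    have h3 := h3.trans (Fmap_src_apply hs M' hj (ofRev e) (ψ.app i w))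
    rw [toRev_ofRev] at h3
    rw [gMap_apply hs ψ _ hj]
    exact h3.symm

theorem gMap_ker (ψ : QvHom (Fobj hs M) (Fobj hs M')) (x : LL M) (hx : canIn M i x = 0) :
    canIn M' i (gMap hs ψ x) = 0 := by
  set w : Wsub M i :=
    ⟨(x, 0), LinearMap.mem_ker.mpr hx, fun h => absurd rfl h, fun _ => rfl⟩ with hw
  have h1 := psi_fst hs ψ w
  have h2 := LinearMap.mem_ker.mp (mem1 (toW hs (ψ.app i w)))
  rw [h1] at h2
  exact h2

theorem F_faithful : (F (k := k) (E := E) hs).Faithful where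
  map_injective := by
    intro X Y φ ψ h
    have h0 : (fun j => FhomApp φ.hom j) = (fun j => FhomApp ψ.hom j) := congrArg (fun f => f.hom.app) h
    have happ : ∀ (j : Q), j ≠ i → ∀ v : X.obj.V j, φ.hom.app j v = ψ.hom.app j v := by
      intro j hj v
      have h1 : FhomApp φ.hom j (cInj _ _ hj v) = FhomApp ψ.hom j (cInj _ _ hj v) := by
        rw [congrFun h0 j]
      have h2 := congrArg (fun z : Wsub Y.obj j => (z : LL Y.obj × Y.obj.V j).2) h1
      exact h2
    have hL : ∀ x : LL X.obj, Lmap φ.hom x = Lmap ψ.hom x := by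
      intro x
      funext p
      rcases p with ⟨j, e⟩
      by_cases hj : j = i
      · subst hj
        exact ((hs j).false (ofRev e)).elim
      · simp only [Lmap_apply]
        exact happ j hj _
    apply ObjectProperty.hom_ext
    apply QvHom.ext'
    funext j
    apply LinearMap.ext
    intro v
    by_cases hj : j = i
    · subst hj
      obtain ⟨x, rfl⟩ := X.property.2 v
      rw [← canIn_Lmap φ.hom x, ← canIn_Lmap ψ.hom x, hL x]
    · exact happ j hj v

end FullFaithful

end BGP
namespace BGP

variable {k : Type} [Field k] {Q : Type} [Fintype Q] [DecidableEq Q]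
  {E : Q → Q → Type} [∀ a b, Fintype (E a b)] {i : Q}

section Fullness

variable (hs : ∀ j : Q, IsEmpty (E j i))

theorem F_full : (F (k := k) (E := E) hs).Full where
  map_surjective := by
    intro X Y ψ0
    letI : DecidableEq (Σ l : Q, revE E i l i) := Classical.decEq _
    let ψ : QvHom (Fobj hs X.obj) (Fobj hs Y.obj) := ψ0.hom
    obtain ⟨s, hsec⟩ := LinearMap.exists_rightInverse_of_surjective (canIn X.obj i)
      (LinearMap.range_eq_top.mpr X.property.2)
    let φi : X.obj.V i →ₗ[k] Y.obj.V i := (canIn Y.obj i).comp ((gMap hs ψ).comp s)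
    have hkey : ∀ x : LL X.obj, φi (canIn X.obj i x) = canIn Y.obj i (gMap hs ψ x) := by
      intro x
      have h1 : canIn X.obj i (s (canIn X.obj i x) - x) = 0 := by
        rw [map_sub]
        rw [show canIn X.obj i (s (canIn X.obj i x)) = canIn X.obj i x from
          LinearMap.congr_fun hsec (canIn X.obj i x)]
        exact sub_self _
      have h2 := gMap_ker hs ψ _ h1
      rw [map_sub, map_sub, sub_eq_zero] at h2
      exact h2
    let app : ∀ j, X.obj.V j →ₗ[k] Y.obj.V j := fun j =>
      if hj : j = i then
        @Eq.rec Q i (fun z _ => X.obj.V z →ₗ[k] Y.obj.V z) φi j hj.symm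
      else phiApp hs ψ j hj
    have app_i : app i = φi := dif_pos rfl
    have app_ne : ∀ (j) (hj : j ≠ i), app j = phiApp hs ψ j hj := fun j hj => dif_neg hj
    have hφcomm : ∀ (a b : Q) (e' : revE E i a b),
        (app b).comp (X.obj.map e') = (Y.obj.map e').comp (app a) := by
      intro a b e'
      by_cases hb : b = i
      · obtain rfl := hb.symm
        by_cases ha : a = i
        · obtain rfl := ha.symm
          exact ((hs i).false (ofRev e')).elim
        · apply LinearMap.ext
          intro v
          simp only [LinearMap.comp_apply]
          rw [app_i, app_ne a ha]
          rw [show X.obj.map e' v = canIn X.obj i (Pi.single ⟨a, e'⟩ v) from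
            (canIn_single X.obj i ⟨a, e'⟩ v).symm]
          rw [hkey]
          rw [gMap_single hs ψ ha e' v]
          rw [canIn_single Y.obj i ⟨a, e'⟩ (phiApp hs ψ a ha v)]
      · by_cases ha : a = i
        · obtain rfl := ha.symm
          exact ((hs b).false (ofRevO e')).elim
        · apply LinearMap.ext
          intro v
          simp only [LinearMap.comp_apply]
          rw [app_ne b hb, app_ne a ha]
          have hsnd : ((Fmap hs X.obj (ofRevN ha hb e') (cInj _ _ ha v)
              : Wsub X.obj b) : LL X.obj × X.obj.V b).2
              = X.obj.map (toRevN ha hb (ofRevN ha hb e')) v :=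
            Fmap_non_apply hs X.obj ha hb _ _
          rw [toRevN_ofRevN] at hsnd
          have hfst : ((Fmap hs X.obj (ofRevN ha hb e') (cInj _ _ ha v)
              : Wsub X.obj b) : LL X.obj × X.obj.V b).1 = 0 :=
            Fmap_non_apply1 hs X.obj ha hb _ _
          have hLmap : Fmap hs X.obj (ofRevN ha hb e') (cInj _ _ ha v)
              = cInj _ _ hb (X.obj.map e' v) :=
            condSub_ext (by rw [hfst]; rfl) (by rw [hsnd]; rfl)
          have hcomm : ψ.app b (Fmap hs X.obj (ofRevN ha hb e') (cInj _ _ ha v))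
              = Fmap hs Y.obj (ofRevN ha hb e') (ψ.app a (cInj _ _ ha v)) :=
            LinearMap.congr_fun (ψ.comm (ofRevN ha hb e')) _
          rw [hLmap] at hcomm
          have h5 : phiApp hs ψ b hb (X.obj.map e' v)
              = ((Fmap hs Y.obj (ofRevN ha hb e') (ψ.app a (cInj _ _ ha v))
                  : Wsub Y.obj b) : LL Y.obj × Y.obj.V b).2 :=
            congrArg (fun z : Wsub Y.obj b => (z : LL Y.obj × Y.obj.V b).2) hcomm
          have h5 := h5.trans (Fmap_non_apply hs Y.obj ha hb _ _)
          rw [toRevN_ofRevN] at h5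
          exact h5
    refine ⟨ObjectProperty.homMk ⟨app, fun {a b} e' => hφcomm a b e'⟩, ?_⟩
    apply ObjectProperty.hom_ext
    apply QvHom.ext'
    funext j
    apply LinearMap.ext
    intro w
    apply condSub_ext
    · show Lmap (⟨app, fun {a b} e' => hφcomm a b e'⟩ : QvHom X.obj Y.obj)
          ((toW hs w) : LL X.obj × X.obj.V j).1
        = ((toW hs (ψ.app j w)) : LL Y.obj × Y.obj.V j).1
      by_cases hj : j = i
      · obtain rfl := hj.symm
        rw [psi_fst hs ψ w]
        funext p
        rcases p with ⟨l, e⟩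
        by_cases hl : l = i
        · obtain rfl := hl.symm
          exact ((hs i).false (ofRev e)).elim
        · rw [gMap_apply hs ψ _ hl]
          show app l (((toW hs w) : LL X.obj × X.obj.V i).1 ⟨l, e⟩)
            = phiApp hs ψ l hl (((toW hs w) : LL X.obj × X.obj.V i).1 ⟨l, e⟩)
          rw [app_ne l hl]
      · rw [show ((toW hs w) : LL X.obj × X.obj.V j).1 = 0 from mem2 (toW hs w) hj,
          map_zero]
        exact (mem2 (toW hs (ψ.app j w)) hj).symm
    · show app j ((toW hs w) : LL X.obj × X.obj.V j).2
        = ((toW hs (ψ.app j w)) : LL Y.obj × Y.obj.V j).2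
      by_cases hj : j = i
      · obtain rfl := hj.symm
        rw [show ((toW hs w) : LL X.obj × X.obj.V i).2 = 0 from mem3 (toW hs w) rfl,
          map_zero]
        exact (psi_snd hs ψ (toW hs w)).symm
      · rw [app_ne j hj]
        have hww : cInj _ _ hj (((toW hs w) : LL X.obj × X.obj.V j).2) = toW hs w := by
          apply condSub_ext
          · simp only [cInj_coe]
            exact (mem2 (toW hs w) hj).symm
          · rfl
        show cSnd _ _ _ (ψ.app j (cInj _ _ hj (((toW hs w) : LL X.obj × X.obj.V j).2)))
          = ((toW hs (ψ.app j w)) : LL Y.obj × Y.obj.V j).2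
        rw [hww]
        rfl

end Fullness

end BGP
namespace BGP

variable {k : Type} [Field k] {Q : Type} [Fintype Q] [DecidableEq Q]
  {E : Q → Q → Type} [∀ a b, Fintype (E a b)] {i : Q}

section Ess

variable (i)
variable (hs : ∀ j : Q, IsEmpty (E j i)) (N : QvRep k Q E)

/-- The range of the canonical outgoing map. -/
noncomputable def RR : Submodule k (∀ p : Σ j : Q, E i j, N.V p.1) :=
  LinearMap.range (canOut N i)

/-- A chosen complement of the range. -/
noncomputable def CC : Submodule k (∀ p : Σ j : Q, E i j, N.V p.1) :=
  Classical.choose (Submodule.exists_isCompl (RR i N))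

theorem hCC : IsCompl (RR i N) (CC i N) :=
  Classical.choose_spec (Submodule.exists_isCompl (RR i N))

/-- Projection onto the complement along the range. -/
noncomputable def prC : (∀ p : Σ j : Q, E i j, N.V p.1) →ₗ[k] CC i N :=
  Submodule.linearProjOfIsCompl (CC i N) (RR i N) (hCC i N).symm

/-- Spaces of the preimage representation. -/
noncomputable def Vsub (j : Q) :
    Submodule k ((∀ p : Σ j : Q, E i j, N.V p.1) × N.V j) :=
  condSub (CC i N) (N.V j) (j = i)

/-- Maps of the preimage representation. -/
noncomputable def Gmap {a b : Q} (e' : revE E i a b) : Vsub i N a →ₗ[k] Vsub i N b :=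
  letI : DecidableEq (Σ j : Q, E i j) := Classical.decEq _
  if hb : b = i then
    (cInj1 (CC i N) (N.V b) hb).comp ((prC i N).comp
      ((LinearMap.single k (fun p : Σ j : Q, E i j => N.V p.1)
          ⟨a, ofRev (cast (congrArg (revE E i a) hb) e')⟩).comp (cSnd _ _ _)))
  else if ha : a = i then
    ((hs b).false (ofRevO (cast (congrArg (fun z => revE E i z b) ha) e'))).elim
  else
    (cInj (CC i N) (N.V b) hb).comp ((N.map (ofRevN ha hb e')).comp (cSnd _ _ _))

theorem Gmap_sink {a : Q} (e' : revE E i a i) :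
    Gmap i hs N e' =
      letI : DecidableEq (Σ j : Q, E i j) := Classical.decEq _
      (cInj1 (CC i N) (N.V i) rfl).comp ((prC i N).comp
        ((LinearMap.single k (fun p : Σ j : Q, E i j => N.V p.1)
            ⟨a, ofRev e'⟩).comp (cSnd _ _ _))) :=
  dif_pos rfl

theorem Gmap_non {a b : Q} (ha : a ≠ i) (hb : b ≠ i) (e' : revE E i a b) :
    Gmap i hs N e' =
      (cInj (CC i N) (N.V b) hb).comp ((N.map (ofRevN ha hb e')).comp (cSnd _ _ _)) := by
  unfold Gmap
  exact (dif_neg hb).trans (dif_neg ha)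

/-- The preimage representation. -/
noncomputable def Gobj : QvRep k Q (revE E i) where
  V j := Vsub i N j
  map e' := Gmap i hs N e'

/-- Type-correcting identity. -/
def toV {j : Q} (x : (Gobj i hs N).V j) : Vsub i N j := x

/-- Reassembly of a family into the outgoing product. -/
def relx (x : ∀ p : Σ j : Q, revE E i j i, (Gobj i hs N).V p.1) :
    ∀ p : Σ j : Q, E i j, N.V p.1 :=
  fun q => (Subtype.val (toV i hs N (x (sOut q)))).2

theorem sum_single_relabel [DecidableEq (Σ j : Q, E i j)]
    (f : ∀ p : Σ j : Q, revE E i j i, N.V p.1) :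
    (∑ p : Σ j : Q, revE E i j i,
        Pi.single (M := fun q : Σ j : Q, E i j => N.V q.1) (sIn p) (f p))
      = fun q => f (sOut q) := by
  funext q
  rcases q with ⟨l, e⟩
  rw [Finset.sum_apply]
  rw [Finset.sum_eq_single (sOut ⟨l, e⟩)]
  · show Pi.single (M := fun q : Σ j : Q, E i j => N.V q.1)
        (⟨l, ofRev (toRev e)⟩ : Σ j : Q, E i j) (f ⟨l, toRev e⟩) ⟨l, e⟩ = f (sOut ⟨l, e⟩)
    rw [ofRev_toRev]
    exact Pi.single_eq_same _ _
  · intro p _ hp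
    exact Pi.single_eq_of_ne (Ne.symm (sIn_ne hp)) _
  · intro h
    exact absurd (Finset.mem_univ _) h

theorem canIn_G (x : ∀ p : Σ j : Q, revE E i j i, (Gobj i hs N).V p.1) :
    canIn (Gobj i hs N) i x = cInj1 (CC i N) (N.V i) rfl (prC i N (relx i hs N x)) := by
  letI : DecidableEq (Σ j : Q, E i j) := Classical.decEq _
  rw [canIn_apply]
  have h1 : ∀ p : Σ j : Q, revE E i j i, (Gobj i hs N).map p.2 (x p)
      = cInj1 (CC i N) (N.V i) rfl (prC i N
          (Pi.single (M := fun q : Σ j : Q, E i j => N.V q.1) (sIn p)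
            ((toV i hs N (x p) : (∀ q : Σ j : Q, E i j, N.V q.1) × N.V p.1).2))) := by
    intro p
    rw [show (Gobj i hs N).map p.2 = Gmap i hs N p.2 from rfl, Gmap_sink i hs N p.2]
    rfl
  rw [Finset.sum_congr rfl fun p _ => h1 p]
  have h2 : ∑ p : Σ j : Q, revE E i j i,
        cInj1 (CC i N) (N.V i) (show i = i from rfl) (prC i N
          (Pi.single (M := fun q : Σ j : Q, E i j => N.V q.1) (sIn p)
            ((toV i hs N (x p) : (∀ q : Σ j : Q, E i j, N.V q.1) × N.V p.1).2)))
      = cInj1 (CC i N) (N.V i) (show i = i from rfl) (prC i N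
          (∑ p : Σ j : Q, revE E i j i,
            Pi.single (M := fun q : Σ j : Q, E i j => N.V q.1) (sIn p)
              ((toV i hs N (x p) : (∀ q : Σ j : Q, E i j, N.V q.1) × N.V p.1).2))) := by
    rw [map_sum, map_sum]
  refine h2.trans ?_
  exact congrArg (fun z => cInj1 (CC i N) (N.V i) rfl (prC i N z))
    (sum_single_relabel i N (fun p => (toV i hs N (x p) : (∀ q : Σ j : Q, E i j, N.V q.1) × N.V p.1).2))

theorem Gobj_surj : Function.Surjective (canIn (Gobj i hs N) i) := by
  show ∀ w : Vsub i N i, ∃ x, canIn (Gobj i hs N) i x = w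
  intro w
  refine ⟨fun p =>
    cInj (CC i N) (N.V p.1) (fun h => (hs i).false (cast (congrArg (E i) h) (ofRev p.2)))
      ((w : (∀ q : Σ j : Q, E i j, N.V q.1) × N.V i).1 ⟨p.1, ofRev p.2⟩), ?_⟩
  refine (canIn_G i hs N _).trans ?_
  have h1 : relx i hs N (fun p =>
      cInj (CC i N) (N.V p.1) (fun h => (hs i).false (cast (congrArg (E i) h) (ofRev p.2)))
        ((w : (∀ q : Σ j : Q, E i j, N.V q.1) × N.V i).1 ⟨p.1, ofRev p.2⟩))
      = (w : (∀ q : Σ j : Q, E i j, N.V q.1) × N.V i).1 := by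
    funext q
    rcases q with ⟨l, e⟩
    show (w : (∀ q : Σ j : Q, E i j, N.V q.1) × N.V i).1 ⟨l, ofRev (toRev e)⟩ = _
    rw [ofRev_toRev]
  rw [h1]
  have h2 : prC i N (w : (∀ q : Σ j : Q, E i j, N.V q.1) × N.V i).1
      = ⟨(w : (∀ q : Σ j : Q, E i j, N.V q.1) × N.V i).1, mem1 w⟩ :=
    Submodule.linearProjOfIsCompl_apply_left (hCC i N).symm
      ⟨(w : (∀ q : Σ j : Q, E i j, N.V q.1) × N.V i).1, mem1 w⟩
  rw [h2]
  apply condSub_ext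
  · rfl
  · exact (mem3 w rfl).symm

theorem Gobj_fd (hfd : ∀ q, FiniteDimensional k (N.V q)) :
    ∀ q, FiniteDimensional k ((Gobj i hs N).V q) := by
  intro q
  show FiniteDimensional k (Vsub i N q)
  haveI : FiniteDimensional k ((∀ p : Σ j : Q, E i j, N.V p.1) × N.V q) := by
    haveI : FiniteDimensional k (∀ p : Σ j : Q, E i j, N.V p.1) := by infer_instance
    infer_instance
  infer_instance

end Ess

end BGP
namespace BGP

variable {k : Type} [Field k] {Q : Type} [Fintype Q] [DecidableEq Q]
  {E : Q → Q → Type} [∀ a b, Fintype (E a b)] {i : Q}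

section Ess2

variable (i)
variable (hs : ∀ j : Q, IsEmpty (E j i)) (N : QvRep k Q E)

/-- Component family of the comparison morphism at `i`. -/
noncomputable def xFam (p : Σ j : Q, revE E i j i) :
    N.V i →ₗ[k] (Gobj i hs N).V p.1 :=
  if h : p.1 = i then ((hs i).false (cast (congrArg (E i) h) (ofRev p.2))).elim
  else (cInj (CC i N) (N.V p.1) h).comp (N.map (ofRev p.2))

/-- The comparison morphism into the ambient product. -/
noncomputable def xmap : N.V i →ₗ[k] ∀ p : Σ j : Q, revE E i j i, (Gobj i hs N).V p.1 :=
  LinearMap.pi (xFam i hs N)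

theorem xFam_ne {l : Q} (hl : l ≠ i) (ep : revE E i l i) :
    xFam i hs N ⟨l, ep⟩ = (cInj (CC i N) (N.V l) hl).comp (N.map (ofRev ep)) :=
  dif_neg hl

theorem relx_xmap (y : N.V i) : relx i hs N (xmap i hs N y) = canOut N i y := by
  funext q
  rcases q with ⟨l, e⟩
  have hl : l ≠ i := fun h => (hs i).false (cast (congrArg (E i) h) e)
  show (Subtype.val (xFam i hs N ⟨l, toRev e⟩ y)).2 = N.map e y
  rw [xFam_ne i hs N hl (toRev e)]
  show N.map (ofRev (toRev e)) y = N.map e y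
  rw [ofRev_toRev]

theorem canIn_xmap (y : N.V i) : canIn (Gobj i hs N) i (xmap i hs N y) = 0 := by
  rw [canIn_G, relx_xmap]
  have hz : prC i N (canOut N i y) = 0 :=
    Submodule.projectionOnto_apply_of_mem_right (hCC i N).symm ⟨y, rfl⟩
  rw [hz, map_zero]; rfl

/-- The comparison morphism at `i`. -/
noncomputable def thetaI : N.V i →ₗ[k] Wsub (Gobj i hs N) i :=
  LinearMap.codRestrict _ ((xmap i hs N).prod 0)
    (fun y => ⟨LinearMap.mem_ker.mpr (canIn_xmap i hs N y),
      fun h => absurd rfl h, fun _ => rfl⟩)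

/-- The comparison morphism away from `i`. -/
noncomputable def thetaJ {j : Q} (hj : j ≠ i) : N.V j →ₗ[k] Wsub (Gobj i hs N) j :=
  (cInj (LinearMap.ker (canIn (Gobj i hs N) i)) ((Gobj i hs N).V j) hj).comp
    (cInj (CC i N) (N.V j) hj)

/-- The comparison morphism componentwise. -/
noncomputable def thetaApp (j : Q) : N.V j →ₗ[k] Wsub (Gobj i hs N) j :=
  if hj : j = i then
    @Eq.rec Q i (fun z _ => N.V z →ₗ[k] Wsub (Gobj i hs N) z)
      (thetaI i hs N) j hj.symm
  else thetaJ i hs N hj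

theorem thetaApp_i : thetaApp i hs N i = thetaI i hs N := dif_pos rfl

theorem thetaApp_ne (j : Q) (hj : j ≠ i) : thetaApp i hs N j = thetaJ i hs N hj :=
  dif_neg hj

theorem theta_comm (a b : Q) (e : E a b) :
    (thetaApp i hs N b).comp (N.map e) = (Fmap hs (Gobj i hs N) e).comp (thetaApp i hs N a) := by
  by_cases hb : b = i
  · exact ((hs a).false (hb ▸ e)).elim
  · by_cases ha : a = i
    · obtain rfl := ha.symm
      apply LinearMap.ext
      intro y
      simp only [LinearMap.comp_apply]
      rw [thetaApp_i, thetaApp_ne i hs N b hb]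
      apply condSub_ext
      · rw [Fmap_src_apply1 hs (Gobj i hs N) hb e]
        rfl
      · rw [Fmap_src_apply hs (Gobj i hs N) hb e]
        show cInj (CC i N) (N.V b) hb (N.map e y) = xFam i hs N ⟨b, toRev e⟩ y
        rw [xFam_ne i hs N hb (toRev e)]
        show cInj (CC i N) (N.V b) hb (N.map e y)
          = cInj (CC i N) (N.V b) hb (N.map (ofRev (toRev e)) y)
        rw [ofRev_toRev]
    · apply LinearMap.ext
      intro y
      simp only [LinearMap.comp_apply]
      rw [thetaApp_ne i hs N b hb, thetaApp_ne i hs N a ha]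
      apply condSub_ext
      · rw [Fmap_non_apply1 hs (Gobj i hs N) ha hb e]
        rfl
      · rw [Fmap_non_apply hs (Gobj i hs N) ha hb e]
        show cInj (CC i N) (N.V b) hb (N.map e y)
          = Gmap i hs N (toRevN ha hb e) (cInj (CC i N) (N.V a) ha y)
        rw [Gmap_non i hs N ha hb]
        show cInj (CC i N) (N.V b) hb (N.map e y)
          = cInj (CC i N) (N.V b) hb (N.map (ofRevN ha hb (toRevN ha hb e))
              (cSnd _ _ _ (cInj (CC i N) (N.V a) ha y)))
        rw [ofRevN_toRevN]
        rfl

theorem theta_bij (hinj : Function.Injective (canOut N i)) :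
    ∀ q, Function.Bijective (thetaApp i hs N q) := by
  intro q
  by_cases hq : q = i
  · obtain rfl := hq.symm
    rw [thetaApp_i]
    constructor
    · intro y y' h
      apply hinj
      rw [show canOut N i y = relx i hs N (xmap i hs N y) from (relx_xmap i hs N y).symm,
        show canOut N i y' = relx i hs N (xmap i hs N y') from (relx_xmap i hs N y').symm]
      have h1 : xmap i hs N y = xmap i hs N y' :=
        congrArg (fun z : Wsub (Gobj i hs N) i => (Subtype.val z).1) h
      rw [h1]
    · intro w
      have hw1 : canIn (Gobj i hs N) i ((Subtype.val w).1) = 0 :=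
        LinearMap.mem_ker.mp (mem1 w)
      rw [canIn_G] at hw1
      have hw2' := congrArg (fun z : Vsub i N i => (Subtype.val z).1) hw1
      have hw2 : prC i N (relx i hs N ((Subtype.val w).1)) = 0 := Subtype.ext hw2'
      have hw3 : relx i hs N ((Subtype.val w).1) ∈ RR i N :=
        (Submodule.linearProjOfIsCompl_apply_eq_zero_iff (hCC i N).symm).mp hw2
      obtain ⟨y, hy⟩ := hw3
      refine ⟨y, ?_⟩
      apply condSub_ext
      · funext p
        rcases p with ⟨l, ep⟩
        by_cases hl : l = i
        · obtain rfl := hl.symm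
          exact ((hs i).false (ofRev ep)).elim
        · have hx : xmap i hs N y ⟨l, ep⟩
              = cInj (CC i N) (N.V l) hl (N.map (ofRev ep) y) := by
            show xFam i hs N ⟨l, ep⟩ y = _
            rw [xFam_ne i hs N hl ep]
            rfl
          show xmap i hs N y ⟨l, ep⟩ = (Subtype.val w).1 ⟨l, ep⟩
          rw [hx]
          apply condSub_ext
          · exact (mem2 (toV i hs N ((Subtype.val w).1 ⟨l, ep⟩)) hl).symm
          · have h7 : N.map (ofRev ep) y
                = (Subtype.val (toV i hs N
                    ((Subtype.val w).1 ⟨l, toRev (ofRev ep)⟩))).2 :=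
              congrFun hy ⟨l, ofRev ep⟩
            rw [toRev_ofRev] at h7
            exact h7
      · exact (mem3 w rfl).symm
  · rw [thetaApp_ne i hs N q hq]
    constructor
    · intro y y' h
      have h1 := congrArg
        (fun z : Wsub (Gobj i hs N) q => (Subtype.val (Subtype.val z).2).2) h
      exact h1
    · intro w
      refine ⟨(Subtype.val (toV i hs N ((Subtype.val w).2))).2, ?_⟩
      apply condSub_ext
      · exact (mem2 w hq).symm
      · apply condSub_ext
        · exact (mem2 (toV i hs N ((Subtype.val w).2)) hq).symm
        · rfl

/-- The comparison morphism. -/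
noncomputable def theta : QvHom N (Fobj hs (Gobj i hs N)) :=
  ⟨thetaApp i hs N, fun {a b} e => theta_comm i hs N a b e⟩

end Ess2

section Iso

/-- Inverse of a pointwise bijective morphism. -/
noncomputable def invHom {E' : Q → Q → Type} {M N : QvRep k Q E'} (φ : QvHom M N)
    (hb : ∀ q, Function.Bijective (φ.app q)) : QvHom N M where
  app q := ((LinearEquiv.ofBijective (φ.app q) (hb q)).symm : N.V q →ₗ[k] M.V q)
  comm {a b} f := by
    apply LinearMap.ext
    intro y
    apply (hb b).1
    simp only [LinearMap.comp_apply]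
    have h1 : φ.app b (M.map f ((LinearEquiv.ofBijective (φ.app a) (hb a)).symm y))
        = N.map f (φ.app a ((LinearEquiv.ofBijective (φ.app a) (hb a)).symm y)) :=
      LinearMap.congr_fun (φ.comm f) _
    show φ.app b ((LinearEquiv.ofBijective (φ.app b) (hb b)).symm (N.map f y))
      = φ.app b (M.map f ((LinearEquiv.ofBijective (φ.app a) (hb a)).symm y))
    rw [h1]
    rw [show φ.app a ((LinearEquiv.ofBijective (φ.app a) (hb a)).symm y) = y from
      (LinearEquiv.ofBijective (φ.app a) (hb a)).apply_symm_apply y]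
    exact (LinearEquiv.ofBijective (φ.app b) (hb b)).apply_symm_apply _

/-- An isomorphism in a full subcategory from a pointwise bijective morphism. -/
noncomputable def isoOf {E' : Q → Q → Type} {P : QvRep k Q E' → Prop}
    {X Y : ObjectProperty.FullSubcategory P} (φ : QvHom X.obj Y.obj)
    (hb : ∀ q, Function.Bijective (φ.app q)) : X ≅ Y where
  hom := ObjectProperty.homMk φ
  inv := ObjectProperty.homMk (invHom φ hb)
  hom_inv_id := by
    apply ObjectProperty.hom_ext
    apply QvHom.ext'
    funext q
    apply LinearMap.ext
    intro v
    exact (LinearEquiv.ofBijective (φ.app q) (hb q)).symm_apply_apply v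
  inv_hom_id := by
    apply ObjectProperty.hom_ext
    apply QvHom.ext'
    funext q
    apply LinearMap.ext
    intro v
    exact (LinearEquiv.ofBijective (φ.app q) (hb q)).apply_symm_apply v

end Iso

section EssSurj

variable {i : Q} (hs : ∀ j : Q, IsEmpty (E j i))

theorem F_essSurj : (F (k := k) (E := E) hs).EssSurj where
  mem_essImage Y := by
    refine ⟨⟨Gobj i hs Y.obj, Gobj_fd i hs Y.obj Y.property.1, Gobj_surj i hs Y.obj⟩, ⟨?_⟩⟩
    exact (isoOf (theta i hs Y.obj) (theta_bij i hs Y.obj Y.property.2)).symm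

end EssSurj

end BGP
namespace BGP

variable {k : Type} [Field k] {Q : Type} [Fintype Q] [DecidableEq Q]
  {E : Q → Q → Type} [∀ a b, Fintype (E a b)] {i : Q}

/-- The reflected space away from `i` is the original space. -/
noncomputable def WsubEquivNe (M : QvRep k Q (revE E i)) {j : Q} (hj : j ≠ i) :
    Wsub M j ≃ₗ[k] M.V j := by
  refine LinearEquiv.ofBijective (cSnd _ _ _) ⟨?_, ?_⟩
  · intro x y h
    apply condSub_ext
    · rw [mem2 x hj, mem2 y hj]
    · exact h
  · intro v
    exact ⟨cInj _ _ hj v, rfl⟩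

/-- The reflected space at `i` is the kernel of the canonical map. -/
noncomputable def WsubEquivI (M : QvRep k Q (revE E i)) :
    Wsub M i ≃ₗ[k] LinearMap.ker (canIn M i) := by
  refine LinearEquiv.ofBijective
    (LinearMap.codRestrict (LinearMap.ker (canIn M i)) (cFst _ _ _) fun x => mem1 x)
    ⟨?_, ?_⟩
  · intro x y h
    apply condSub_ext
    · exact congrArg Subtype.val h
    · rw [mem3 x rfl, mem3 y rfl]
  · intro z
    refine ⟨cInj1 _ _ rfl z, ?_⟩
    apply Subtype.ext
    rfl

end BGP

/-- Let `Q` be a finite quiver with a source `i` and let `Q'` be obtained from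
`Q` by reversing all arrows incident to `i` (so `i` is a sink of `Q'`).  The BGP reflection
functor at `i` induces an equivalence between the full subcategory of finite-dimensional
representations `M` of `Q'` with `⊕_{a : j → i} M_j → M_i` surjective (equivalently
`Hom(M, S_i) = 0`) and the full subcategory of finite-dimensional representations `N` of `Q`
with `N_i → ⊕_{a : i → j} N_j` injective (equivalently `Hom(S_i, N) = 0`); the functor keeps
the spaces away from `i` and replaces the space at `i` by the kernel of the canonical map. -/
theorem bgp_reflection_equivalence
    (k : Type) [Field k] (Q : Type) [Fintype Q] [DecidableEq Q]
    (E : Q → Q → Type) [∀ a b, Fintype (E a b)]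
    (i : Q) (hsource : ∀ j : Q, IsEmpty (E j i)) :
    ∃ Eqv : ObjectProperty.FullSubcategory
          (fun M : QvRep k Q (revE E i) =>
            (∀ q, FiniteDimensional k (M.V q)) ∧ Function.Surjective (canIn M i)) ≌
        ObjectProperty.FullSubcategory
          (fun N : QvRep k Q E =>
            (∀ q, FiniteDimensional k (N.V q)) ∧ Function.Injective (canOut N i)),
      ∀ M, (∀ j, j ≠ i → Nonempty ((Eqv.functor.obj M).obj.V j ≃ₗ[k] M.obj.V j)) ∧
        Nonempty ((Eqv.functor.obj M).obj.V i ≃ₗ[k] LinearMap.ker (canIn M.obj i)) := by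
  haveI := BGP.F_faithful (k := k) (E := E) hsource
  haveI := BGP.F_full (k := k) (E := E) hsource
  haveI := BGP.F_essSurj (k := k) (E := E) hsource
  haveI : (BGP.F (k := k) (E := E) hsource).IsEquivalence := {}
  refine ⟨(BGP.F (k := k) (E := E) hsource).asEquivalence, ?_⟩
  intro M
  constructor
  · intro j hj
    exact ⟨BGP.WsubEquivNe M.obj hj⟩
  · exact ⟨BGP.WsubEquivI M.obj⟩
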